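/- Define recursively H_0 = ∅, and H_k = argmin over S ⊋ H_{k−1} of θ(S, H_{k−1}) := [(I_{H_{k−1}} − I_S)/τ − Σ_{n∈S∖H_{k−1}} b_n/a_n] / (Σ_{n∈S∖H_{k−1}} 1/a_n), with θ_k the minimal value (choosing a maximal minimizer). Then the sequence θ_k is strictly increasing: θ_k > θ_{k−1} for all k > 0. -/
import Mathlib


open Finset

/-- Strict monotonicity of the values `θ k` in the water-filling decomposition used
in the convergence proof of the generalized transmission time policy.  `H 0 = ∅`,
and for each `1 ≤ k ≤ K`, `H k` is a maximal minimizer over `S ⊋ H (k-1)` of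
`θ(S, H (k-1)) = ((I_{H (k-1)} - I_S)/τ - ∑_{n ∈ S \ H (k-1)} b n / a n) /
(∑_{n ∈ S \ H (k-1)} 1 / a n)`, with `θ k` the minimal value (`θ 0 = -∞` is
implicit, so only `k ≥ 2` is asserted).  Then `θ (k-1) < θ k`. -/
theorem stmt_9 (N : ℕ) (τ : ℝ) (hτ : 0 < τ)
    (a b : Fin N → ℝ) (ha : ∀ n, 0 < a n) (hb : ∀ n, 0 ≤ b n)
    (I : Finset (Fin N) → ℝ)
    (hI : ∀ S, 0 ≤ I S ∧ I S ≤ τ) (hIempty : I ∅ = τ)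
    (hImono : ∀ S T : Finset (Fin N), S ⊆ T → I T ≤ I S)
    (K : ℕ) (H : ℕ → Finset (Fin N)) (θ : ℕ → ℝ)
    (hH0 : H 0 = ∅)
    (hrec : ∀ k, 1 ≤ k → k ≤ K →
      H (k-1) ⊂ H k ∧
      θ k = ((I (H (k-1)) - I (H k)) / τ - ∑ n ∈ H k \ H (k-1), b n / a n) /
            (∑ n ∈ H k \ H (k-1), 1 / a n) ∧
      (∀ S : Finset (Fin N), H (k-1) ⊂ S →
        θ k ≤ ((I (H (k-1)) - I S) / τ - ∑ n ∈ S \ H (k-1), b n / a n) /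
              (∑ n ∈ S \ H (k-1), 1 / a n)) ∧
      (∀ S : Finset (Fin N), H (k-1) ⊂ S →
        ((I (H (k-1)) - I S) / τ - ∑ n ∈ S \ H (k-1), b n / a n) /
          (∑ n ∈ S \ H (k-1), 1 / a n) = θ k → S ⊆ H k)) :
    ∀ k, 2 ≤ k → k ≤ K → θ (k-1) < θ k := by
  intro k hk2 hkK
  have hk1 : 1 ≤ k - 1 := by omega
  have hk1K : k - 1 ≤ K := by omega
  obtain ⟨hsub1, hθ1, hmin1, hmax1⟩ := hrec (k-1) hk1 hk1K
  obtain ⟨hsub2, hθ2, hmin2, hmax2⟩ := hrec k (by omega) hkK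
  set P := H (k-1-1) with hP
  set Q := H (k-1) with hQ
  set R := H k with hR
  have hPQ : P ⊆ Q := hsub1.subset
  have hQR : Q ⊆ R := hsub2.subset
  -- denominators
  set d1 : ℝ := ∑ n ∈ Q \ P, 1 / a n with hd1
  set d2 : ℝ := ∑ n ∈ R \ Q, 1 / a n with hd2
  set n1 : ℝ := (I P - I Q) / τ - ∑ n ∈ Q \ P, b n / a n with hn1
  set n2 : ℝ := (I Q - I R) / τ - ∑ n ∈ R \ Q, b n / a n with hn2
  have hd1pos : 0 < d1 := by
    apply Finset.sum_pos
    · intro n _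
      have := ha n
      positivity
    · exact Finset.sdiff_nonempty.mpr hsub1.2
  have hd2pos : 0 < d2 := by
    apply Finset.sum_pos
    · intro n _
      have := ha n
      positivity
    · exact Finset.sdiff_nonempty.mpr hsub2.2
  -- split sums
  have hsplit : ∀ f : Fin N → ℝ, ∑ n ∈ R \ P, f n = (∑ n ∈ Q \ P, f n) + ∑ n ∈ R \ Q, f n := by
    intro f
    have hdisj : Disjoint (Q \ P) (R \ Q) := by
      simp only [Finset.disjoint_left, Finset.mem_sdiff]
      tauto
    have hun : (Q \ P) ∪ (R \ Q) = R \ P := by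
      ext x
      simp only [Finset.mem_union, Finset.mem_sdiff]
      constructor
      · rintro (⟨h1, h2⟩ | ⟨h1, h2⟩)
        · exact ⟨hQR h1, h2⟩
        · exact ⟨h1, fun hx => h2 (hPQ hx)⟩
      · rintro ⟨h1, h2⟩
        by_cases hq : x ∈ Q
        · exact Or.inl ⟨hq, h2⟩
        · exact Or.inr ⟨h1, hq⟩
    rw [← hun, Finset.sum_union hdisj]
  have hPR : P ⊂ R := hsub1.trans hsub2
  have hmed := hmin1 R hPR
  have hmedval : ((I P - I R) / τ - ∑ n ∈ R \ P, b n / a n) / (∑ n ∈ R \ P, 1 / a n)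
      = (n1 + n2) / (d1 + d2) := by
    rw [hsplit (fun n => b n / a n), hsplit (fun n => 1 / a n)]
    have : (I P - I R) / τ = (I P - I Q) / τ + (I Q - I R) / τ := by ring
    rw [this, hn1, hn2, hd1, hd2]
    ring
  rw [hmedval] at hmed
  have hθ1' : n1 = θ (k-1) * d1 := by
    rw [hθ1]
    field_simp
  have hθ2' : n2 = θ k * d2 := by
    rw [hθ2]
    field_simp
  by_contra hcon
  push_neg at hcon
  -- θ k ≤ θ (k-1); then mediant ≤ θ (k-1), so equality, so R ⊆ Q, contradiction
  have hle : (n1 + n2) / (d1 + d2) ≤ θ (k-1) := by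
    rw [div_le_iff₀ (by linarith)]
    have : n2 ≤ θ (k-1) * d2 := by
      rw [hθ2']
      nlinarith
    nlinarith [hθ1']
  have heq : (n1 + n2) / (d1 + d2) = θ (k-1) := le_antisymm hle hmed
  have hRQ : R ⊆ Q := by
    apply hmax1 R hPR
    rw [hmedval, heq]
  exact hsub2.2 hRQ
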